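/- arXiv:math/0603397 — 4 statements merged into one kernel-verified Lean document; each statement's English description precedes it below -/
import Mathlib

section
/- In the free group F on two generators x and y, setting a = [y, x] = y⁻¹x⁻¹yx, the equation y⁻¹ · a · x⁻¹ · y · x = y · a · y⁻¹ · a does not hold in F. -/
/-- Equation (7) of the paper fails in the free group: with a = [y,x] = y⁻¹x⁻¹yx,
y⁻¹·a·x⁻¹·y·x ≠ y·a·y⁻¹·a. -/
theorem scott_equation7_fails :
    let x : FreeGroup (Fin 2) := FreeGroup.of 0
    let y : FreeGroup (Fin 2) := FreeGroup.of 1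
    let a : FreeGroup (Fin 2) := y⁻¹ * x⁻¹ * y * x
    y⁻¹ * a * x⁻¹ * y * x ≠ y * a * y⁻¹ * a := by
  decide
end

section
/- Let G be a group and let σ₁, σ₂, x ∈ G satisfy the braid relation σ₁σ₂σ₁ = σ₂σ₁σ₂, the commutation relation σ₂x = xσ₂, and x(σ₁⁻¹xσ₁⁻¹) = (σ₁⁻¹xσ₁⁻¹)x. Then the element y = σ₁⁻¹xσ₁ satisfies y(σ₂⁻¹yσ₂⁻¹) = (σ₂⁻¹yσ₂⁻¹)y. -/
/-- Relation (16) of Lemma 3. -/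
theorem lemma3_relation16 {G : Type*} [Group G] (σ₁ σ₂ x : G)
    (hb : σ₁ * σ₂ * σ₁ = σ₂ * σ₁ * σ₂)
    (hc : σ₂ * x = x * σ₂)
    (h : x * (σ₁⁻¹ * x * σ₁⁻¹) = (σ₁⁻¹ * x * σ₁⁻¹) * x) :
    (σ₁⁻¹ * x * σ₁) * (σ₂⁻¹ * (σ₁⁻¹ * x * σ₁) * σ₂⁻¹) =
      (σ₂⁻¹ * (σ₁⁻¹ * x * σ₁) * σ₂⁻¹) * (σ₁⁻¹ * x * σ₁) := by
  have hc' : x * σ₂⁻¹ = σ₂⁻¹ * x := by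
    rw [eq_comm, inv_mul_eq_iff_eq_mul, ← mul_assoc, hc, mul_inv_cancel_right]
  have hb' : σ₂⁻¹ * σ₁⁻¹ * σ₂⁻¹ = σ₁⁻¹ * σ₂⁻¹ * σ₁⁻¹ := by
    have := congrArg (·⁻¹) hb
    simpa [mul_inv_rev, mul_assoc] using this.symm
  have k1 : σ₁ * σ₂⁻¹ * σ₁⁻¹ = σ₂⁻¹ * σ₁⁻¹ * σ₂ := by
    calc σ₁ * σ₂⁻¹ * σ₁⁻¹ = σ₁ * (σ₂⁻¹ * σ₁⁻¹ * σ₂⁻¹) * σ₂ := by group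
      _ = σ₁ * (σ₁⁻¹ * σ₂⁻¹ * σ₁⁻¹) * σ₂ := by rw [hb']
      _ = σ₂⁻¹ * σ₁⁻¹ * σ₂ := by group
  have k2 : σ₂ * σ₁ * σ₂⁻¹ = σ₁⁻¹ * σ₂ * σ₁ := by
    calc σ₂ * σ₁ * σ₂⁻¹ = σ₁⁻¹ * (σ₁ * σ₂ * σ₁) * σ₂⁻¹ := by group
      _ = σ₁⁻¹ * (σ₂ * σ₁ * σ₂) * σ₂⁻¹ := by rw [hb]
      _ = σ₁⁻¹ * σ₂ * σ₁ := by group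
  calc (σ₁⁻¹ * x * σ₁) * (σ₂⁻¹ * (σ₁⁻¹ * x * σ₁) * σ₂⁻¹)
      = σ₁⁻¹ * x * (σ₁ * σ₂⁻¹ * σ₁⁻¹) * x * (σ₁ * σ₂⁻¹) := by group
    _ = σ₁⁻¹ * x * (σ₂⁻¹ * σ₁⁻¹ * σ₂) * x * (σ₁ * σ₂⁻¹) := by rw [k1]
    _ = σ₁⁻¹ * (x * σ₂⁻¹) * σ₁⁻¹ * (σ₂ * x) * (σ₁ * σ₂⁻¹) := by group
    _ = σ₁⁻¹ * (σ₂⁻¹ * x) * σ₁⁻¹ * (x * σ₂) * (σ₁ * σ₂⁻¹) := by rw [hc', hc]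
    _ = (σ₁⁻¹ * σ₂⁻¹) * (x * σ₁⁻¹ * x) * (σ₂ * σ₁ * σ₂⁻¹) := by group
    _ = (σ₁⁻¹ * σ₂⁻¹) * (x * σ₁⁻¹ * x) * (σ₁⁻¹ * σ₂ * σ₁) := by rw [k2]
    _ = (σ₁⁻¹ * σ₂⁻¹) * (x * (σ₁⁻¹ * x * σ₁⁻¹)) * (σ₂ * σ₁) := by group
    _ = (σ₁⁻¹ * σ₂⁻¹) * ((σ₁⁻¹ * x * σ₁⁻¹) * x) * (σ₂ * σ₁) := by rw [h]
    _ = (σ₁⁻¹ * σ₂⁻¹ * σ₁⁻¹) * (x * σ₁⁻¹ * x) * (σ₂ * σ₁) := by group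
    _ = (σ₂⁻¹ * σ₁⁻¹ * σ₂⁻¹) * (x * σ₁⁻¹ * x) * (σ₂ * σ₁) := by rw [hb']
    _ = σ₂⁻¹ * σ₁⁻¹ * (σ₂⁻¹ * x) * σ₁⁻¹ * (x * σ₂) * σ₁ := by group
    _ = σ₂⁻¹ * σ₁⁻¹ * (x * σ₂⁻¹) * σ₁⁻¹ * (σ₂ * x) * σ₁ := by rw [← hc', ← hc]
    _ = σ₂⁻¹ * σ₁⁻¹ * x * (σ₂⁻¹ * σ₁⁻¹ * σ₂) * x * σ₁ := by group
    _ = σ₂⁻¹ * σ₁⁻¹ * x * (σ₁ * σ₂⁻¹ * σ₁⁻¹) * x * σ₁ := by rw [← k1]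
    _ = (σ₂⁻¹ * (σ₁⁻¹ * x * σ₁) * σ₂⁻¹) * (σ₁⁻¹ * x * σ₁) := by group
end

section
/- Let G be a group and let σ₁, σ₂, u, v ∈ G satisfy the braid relation σ₁σ₂σ₁ = σ₂σ₁σ₂, the commutation relations σ₂u = uσ₂ and σ₂v = vσ₂, and v(σ₁⁻¹u⁻¹σ₁)v⁻¹(σ₁⁻¹uσ₁) = σ₁². Then the elements u' = σ₁⁻¹uσ₁ and v' = σ₁⁻¹vσ₁ satisfy v'(σ₂⁻¹u'⁻¹σ₂)v'⁻¹(σ₂⁻¹u'σ₂) = σ₂². -/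
/-- Relation (17) of Lemma 3. -/
theorem lemma3_relation17 {G : Type*} [Group G] (σ₁ σ₂ u v : G)
    (hb : σ₁ * σ₂ * σ₁ = σ₂ * σ₁ * σ₂)
    (hcu : σ₂ * u = u * σ₂)
    (hcv : σ₂ * v = v * σ₂)
    (h : v * (σ₁⁻¹ * u⁻¹ * σ₁) * v⁻¹ * (σ₁⁻¹ * u * σ₁) = σ₁ ^ 2) :
    (σ₁⁻¹ * v * σ₁) * (σ₂⁻¹ * (σ₁⁻¹ * u * σ₁)⁻¹ * σ₂) * (σ₁⁻¹ * v * σ₁)⁻¹ *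
      (σ₂⁻¹ * (σ₁⁻¹ * u * σ₁) * σ₂) = σ₂ ^ 2 := by
  have hcu0 : σ₂ * u * σ₂⁻¹ = u := by rw [hcu]; group
  have hcu1 : σ₂ * u⁻¹ * σ₂⁻¹ = u⁻¹ := by
    rw [show σ₂ * u⁻¹ * σ₂⁻¹ = (σ₂ * u * σ₂⁻¹)⁻¹ by group, hcu0]
  have hcv0 : σ₂ * v * σ₂⁻¹ = v := by rw [hcv]; group
  have hcv1 : σ₂ * v⁻¹ * σ₂⁻¹ = v⁻¹ := by
    rw [show σ₂ * v⁻¹ * σ₂⁻¹ = (σ₂ * v * σ₂⁻¹)⁻¹ by group, hcv0]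
  have hbr : σ₁ * σ₂ * σ₁⁻¹ = σ₂⁻¹ * σ₁ * σ₂ := by
    calc σ₁ * σ₂ * σ₁⁻¹ = σ₂⁻¹ * (σ₂ * σ₁ * σ₂) * σ₁⁻¹ := by group
      _ = σ₂⁻¹ * (σ₁ * σ₂ * σ₁) * σ₁⁻¹ := by rw [hb]
      _ = σ₂⁻¹ * σ₁ * σ₂ := by group
  have e1 : σ₁ * v * σ₁⁻¹ * u⁻¹ * (σ₁ * v⁻¹ * σ₁⁻¹) * u = σ₁ ^ 2 := by
    calc σ₁ * v * σ₁⁻¹ * u⁻¹ * (σ₁ * v⁻¹ * σ₁⁻¹) * u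
        = σ₁ * (v * (σ₁⁻¹ * u⁻¹ * σ₁) * v⁻¹ * (σ₁⁻¹ * u * σ₁)) * σ₁⁻¹ := by group
      _ = σ₁ * σ₁ ^ 2 * σ₁⁻¹ := by rw [h]
      _ = σ₁ ^ 2 := by group
  have e2 : (σ₂⁻¹ * (σ₁ * v * σ₁⁻¹) * σ₂) * u⁻¹ * (σ₂⁻¹ * (σ₁ * v⁻¹ * σ₁⁻¹) * σ₂) * u
      = σ₂⁻¹ * σ₁ ^ 2 * σ₂ := by
    calc (σ₂⁻¹ * (σ₁ * v * σ₁⁻¹) * σ₂) * u⁻¹ * (σ₂⁻¹ * (σ₁ * v⁻¹ * σ₁⁻¹) * σ₂) * u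
        = σ₂⁻¹ * (σ₁ * v * σ₁⁻¹ * (σ₂ * u⁻¹ * σ₂⁻¹) * (σ₁ * v⁻¹ * σ₁⁻¹) * (σ₂ * u * σ₂⁻¹)) * σ₂ := by
          group
      _ = σ₂⁻¹ * (σ₁ * v * σ₁⁻¹ * u⁻¹ * (σ₁ * v⁻¹ * σ₁⁻¹) * u) * σ₂ := by rw [hcu0, hcu1]
      _ = σ₂⁻¹ * σ₁ ^ 2 * σ₂ := by rw [e1]
  calc (σ₁⁻¹ * v * σ₁) * (σ₂⁻¹ * (σ₁⁻¹ * u * σ₁)⁻¹ * σ₂) * (σ₁⁻¹ * v * σ₁)⁻¹ *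
      (σ₂⁻¹ * (σ₁⁻¹ * u * σ₁) * σ₂)
      = (σ₂⁻¹ * σ₁⁻¹) * ((σ₁ * σ₂ * σ₁⁻¹) * v * (σ₁ * σ₂ * σ₁⁻¹)⁻¹ * u⁻¹ *
          ((σ₁ * σ₂ * σ₁⁻¹) * v⁻¹ * (σ₁ * σ₂ * σ₁⁻¹)⁻¹) * u) * (σ₁ * σ₂) := by group
    _ = (σ₂⁻¹ * σ₁⁻¹) * ((σ₂⁻¹ * σ₁ * σ₂) * v * (σ₂⁻¹ * σ₁ * σ₂)⁻¹ * u⁻¹ *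
          ((σ₂⁻¹ * σ₁ * σ₂) * v⁻¹ * (σ₂⁻¹ * σ₁ * σ₂)⁻¹) * u) * (σ₁ * σ₂) := by rw [hbr]
    _ = (σ₂⁻¹ * σ₁⁻¹) * ((σ₂⁻¹ * (σ₁ * (σ₂ * v * σ₂⁻¹) * σ₁⁻¹) * σ₂) * u⁻¹ *
          (σ₂⁻¹ * (σ₁ * (σ₂ * v⁻¹ * σ₂⁻¹) * σ₁⁻¹) * σ₂) * u) * (σ₁ * σ₂) := by group
    _ = (σ₂⁻¹ * σ₁⁻¹) * ((σ₂⁻¹ * (σ₁ * v * σ₁⁻¹) * σ₂) * u⁻¹ *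
          (σ₂⁻¹ * (σ₁ * v⁻¹ * σ₁⁻¹) * σ₂) * u) * (σ₁ * σ₂) := by rw [hcv0, hcv1]
    _ = (σ₂⁻¹ * σ₁⁻¹) * (σ₂⁻¹ * σ₁ ^ 2 * σ₂) * (σ₁ * σ₂) := by rw [e2]
    _ = (σ₂⁻¹ * σ₁⁻¹ * σ₂⁻¹) * σ₁ * (σ₁ * σ₂ * σ₁) * σ₂ := by rw [pow_two]; group
    _ = (σ₂⁻¹ * σ₁⁻¹ * σ₂⁻¹) * σ₁ * (σ₂ * σ₁ * σ₂) * σ₂ := by rw [hb]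
    _ = σ₂⁻¹ * σ₁⁻¹ * (σ₂⁻¹ * σ₁ * σ₂) * (σ₁ * σ₂ ^ 2) := by rw [pow_two]; group
    _ = σ₂⁻¹ * σ₁⁻¹ * (σ₁ * σ₂ * σ₁⁻¹) * (σ₁ * σ₂ ^ 2) := by rw [← hbr]
    _ = σ₂ ^ 2 := by group
end

section
/- The group G presented by generators a, b with relations aba = bab and ab²a = 1 (the braid group B₃(S²) of the sphere) has an element of finite order greater than 1; in fact (ab)³ has order dividing 2 and is nontrivial, so G has torsion. -/
def sphereBraid3Rels : Set (FreeGroup (Fin 2)) :=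
  {FreeGroup.of 0 * FreeGroup.of 1 * FreeGroup.of 0 *
     (FreeGroup.of 1 * FreeGroup.of 0 * FreeGroup.of 1)⁻¹,
   FreeGroup.of 0 * FreeGroup.of 1 ^ 2 * FreeGroup.of 0}

lemma sb3_key {G : Type*} [Group G] (a b : G)
    (h1 : a * b * a = b * a * b) (h2 : a * b ^ 2 * a = 1) :
    ((a * b) ^ 3) ^ 2 = 1 := by
  have h2' : a * (b * b) * a = 1 := by rw [← h2]; rw [pow_two]
  have hbb' : b * b = a⁻¹ * a⁻¹ := by
    have := congrArg (fun x => a⁻¹ * x * a⁻¹) h2'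
    simpa [mul_assoc] using this
  have haa : a * a = b⁻¹ * b⁻¹ := by
    have := congrArg (fun x : G => x⁻¹) hbb'
    simpa [mul_inv_rev] using this.symm
  have e1 : (a * b * a) * (a * b * a) = a * a := by
    calc (a * b * a) * (a * b * a) = a * b * (a * a) * b * a := by group
    _ = a * b * (b⁻¹ * b⁻¹) * b * a := by rw [haa]
    _ = a * a := by group
  have e2 : (b * a * b) * (b * a * b) = b * b := by
    calc (b * a * b) * (b * a * b) = b * (a * (b * b) * a) * b := by group
    _ = b * b := by rw [h2']; group
  have ha2b2 : a * a = b * b := by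
    rw [← e1, h1, e2]
  have hbb2 : b * b = b⁻¹ * b⁻¹ := by rw [← ha2b2, haa]
  have ha4 : (a * a) * (a * a) = 1 := by
    nth_rewrite 1 [ha2b2]
    rw [haa]; group
  have hab3 : (a * b) ^ 3 = a * a := by
    calc (a * b) ^ 3 = (a * b * a) * (b * a * b) := by
          rw [pow_succ, pow_succ, pow_one]; group
    _ = (a * b * a) * (a * b * a) := by rw [h1]
    _ = a * a := e1
  rw [hab3, pow_two]
  exact ha4

/-- In B₃(S²) = ⟨a, b ∣ aba = bab, ab²a = 1⟩, the element (ab)³ is a nontrivial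
element of order dividing 2; hence the group has torsion. -/
theorem sphere_braid3_torsion :
    let a : PresentedGroup sphereBraid3Rels := PresentedGroup.of 0
    let b : PresentedGroup sphereBraid3Rels := PresentedGroup.of 1
    (a * b) ^ 3 ≠ 1 ∧ ((a * b) ^ 3) ^ 2 = 1 := by
  intro a b
  constructor
  · -- map to Multiplicative (ZMod 4), a ↦ 1, b ↦ 1; (ab)^3 ↦ 6 = 2 ≠ 0
    have hrel : ∀ r ∈ sphereBraid3Rels,
        FreeGroup.lift (fun _ : Fin 2 => Multiplicative.ofAdd (1 : ZMod 4)) r = 1 := by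
      intro r hr
      rcases hr with h | h <;> subst h <;> simp <;> decide
    intro h
    have := congrArg (PresentedGroup.toGroup hrel) h
    simp only [map_pow, map_mul, map_one] at this
    rw [show a = PresentedGroup.of 0 from rfl, show b = PresentedGroup.of 1 from rfl,
      PresentedGroup.toGroup.of, PresentedGroup.toGroup.of] at this
    revert this
    decide
  · -- the relations hold in the presented group
    have mem1 : (FreeGroup.of 0 * FreeGroup.of 1 * FreeGroup.of 0 *
        (FreeGroup.of 1 * FreeGroup.of 0 * FreeGroup.of 1)⁻¹ : FreeGroup (Fin 2)) ∈
        Subgroup.normalClosure sphereBraid3Rels :=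
      Subgroup.subset_normalClosure (Or.inl rfl)
    have mem2 : (FreeGroup.of 0 * FreeGroup.of 1 ^ 2 * FreeGroup.of 0 : FreeGroup (Fin 2)) ∈
        Subgroup.normalClosure sphereBraid3Rels :=
      Subgroup.subset_normalClosure (Or.inr rfl)
    have h1' : (PresentedGroup.mk sphereBraid3Rels) (FreeGroup.of 0 * FreeGroup.of 1 *
        FreeGroup.of 0 * (FreeGroup.of 1 * FreeGroup.of 0 * FreeGroup.of 1)⁻¹) = 1 :=
      (QuotientGroup.eq_one_iff _).mpr mem1
    have h2' : (PresentedGroup.mk sphereBraid3Rels) (FreeGroup.of 0 * FreeGroup.of 1 ^ 2 *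
        FreeGroup.of 0) = 1 :=
      (QuotientGroup.eq_one_iff _).mpr mem2
    simp only [map_mul, map_inv, map_pow] at h1' h2'
    have h1 : a * b * a = b * a * b := by
      have := mul_eq_one_iff_eq_inv.mp h1'
      simpa [a, b, PresentedGroup.of] using this.trans (by simp)
    have h2 : a * b ^ 2 * a = 1 := by
      simpa [a, b, PresentedGroup.of] using h2'
    exact sb3_key a b h1 h2
end
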